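/- Let D be a finite distributive lattice with a valuation φ, and let P ⊆ D be a subset containing the minimum 0̂ and every join-irreducible element of D. Then for any t ∈ P that is neither 0̂ nor join-irreducible in D, Σ_{s ∈ P, s ≤ t} μ_P(s,t) φ(s) = 0, where μ_P is the Möbius function of the induced subposet P. -/

import Mathlib

open scoped Classical

open Finset in
/-- Zaslavsky's Corollary 2.2: Let `D` be a finite distributive lattice
with a valuation `φ` (`φ ⊥ = 0` and `φ(x ⊔ y) + φ(x ⊓ y) = φ x + φ y`), and let `P ⊆ D`
contain `⊥` and every join-irreducible element of `D`.  Then for any `t ∈ P` which is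
neither `⊥` nor join-irreducible, `∑_{s ∈ P, s ≤ t} μ_P(s,t) φ(s) = 0`, where `μ_P` is the
Möbius function of the induced subposet `P`. -/
theorem zaslavsky_valuation_identity
    (D : Type) [DistribLattice D] [OrderBot D] [Fintype D]
    (φ : D → ℝ)
    (hφbot : φ ⊥ = 0)
    (hφ : ∀ x y : D, φ (x ⊔ y) + φ (x ⊓ y) = φ x + φ y)
    (P : Set D) (hbot : ⊥ ∈ P) (hirr : ∀ a : D, SupIrred a → a ∈ P)
    (μP : P → P → ℤ)
    (hμ_refl : ∀ s : P, μP s s = 1)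
    (hμ_lt : ∀ s t : P, s < t →
      μP s t = -∑ u ∈ univ.filter (fun u : P => s ≤ u ∧ u < t), μP s u)
    (hμ_zero : ∀ s t : P, ¬ s ≤ t → μP s t = 0)
    (t : P) (ht_bot : (t : D) ≠ ⊥) (ht_irr : ¬ SupIrred (t : D)) :
    ∑ s ∈ univ.filter (fun s : P => s ≤ t), (μP s t : ℝ) * φ s = 0 := by
  classical
  set F : P → ℝ := fun t => ∑ s ∈ univ.filter (fun s : P => s ≤ t), (μP s t : ℝ) * φ s
    with hFdef
  -- delta property of the Möbius function
  have hdelta : ∀ u t : P,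
      (∑ s ∈ univ.filter (fun s : P => u ≤ s ∧ s ≤ t), μP u s) = if u = t then 1 else 0 := by
    intro u t
    by_cases hut : u ≤ t
    · rcases eq_or_lt_of_le hut with rfl | hlt
      · have h1 : univ.filter (fun s : P => u ≤ s ∧ s ≤ u) = {u} := by
          ext s
          simp only [mem_filter, mem_univ, true_and, mem_singleton]
          constructor
          · rintro ⟨h1, h2⟩; exact le_antisymm h2 h1
          · rintro rfl; exact ⟨le_refl _, le_refl _⟩
        rw [h1, sum_singleton, hμ_refl, if_pos rfl]
      · rw [if_neg (ne_of_lt hlt)]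
        have hsplit : univ.filter (fun s : P => u ≤ s ∧ s ≤ t)
            = insert t (univ.filter (fun s : P => u ≤ s ∧ s < t)) := by
          ext s
          simp only [mem_filter, mem_univ, true_and, mem_insert]
          constructor
          · rintro ⟨h1, h2⟩
            rcases eq_or_lt_of_le h2 with rfl | h
            · exact Or.inl rfl
            · exact Or.inr ⟨h1, h⟩
          · rintro (rfl | ⟨h1, h2⟩)
            · exact ⟨le_of_lt hlt, le_refl _⟩
            · exact ⟨h1, le_of_lt h2⟩
        rw [hsplit, sum_insert (by simp), hμ_lt u t hlt]
        ring
    · rw [if_neg (fun h => hut (le_of_eq h))]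
      have h0 : univ.filter (fun s : P => u ≤ s ∧ s ≤ t) = ∅ := by
        rw [filter_eq_empty_iff]
        rintro s _ ⟨h1, h2⟩
        exact hut (h1.trans h2)
      rw [h0, sum_empty]
  -- Möbius inversion
  have hinv : ∀ t : P, ∑ s ∈ univ.filter (fun s : P => s ≤ t), F s = φ t := by
    intro t
    have step1 : ∀ s : P, F s = ∑ u ∈ (univ : Finset P), (μP u s : ℝ) * φ u := by
      intro s
      simp only [hFdef]
      rw [sum_filter]
      apply sum_congr rfl
      intro u _
      by_cases h : u ≤ s
      · rw [if_pos h]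
      · rw [if_neg h, hμ_zero u s h]; simp
    calc ∑ s ∈ univ.filter (fun s : P => s ≤ t), F s
        = ∑ s ∈ univ.filter (fun s : P => s ≤ t), ∑ u ∈ (univ : Finset P),
            (μP u s : ℝ) * φ u := by
          exact sum_congr rfl (fun s _ => step1 s)
      _ = ∑ u ∈ (univ : Finset P), ∑ s ∈ univ.filter (fun s : P => s ≤ t),
            (μP u s : ℝ) * φ u := sum_comm
      _ = ∑ u ∈ (univ : Finset P), (if u = t then 1 else 0 : ℝ) * φ u := by
          apply sum_congr rfl
          intro u _
          rw [← sum_mul]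
          congr 1
          have : ∑ s ∈ univ.filter (fun s : P => s ≤ t), (μP u s : ℝ)
              = ∑ s ∈ univ.filter (fun s : P => u ≤ s ∧ s ≤ t), (μP u s : ℝ) := by
            rw [sum_filter, sum_filter]
            apply sum_congr rfl
            intro s _
            by_cases h1 : s ≤ t
            · by_cases h2 : u ≤ s
              · simp [h1, h2]
              · simp [h1, h2, hμ_zero u s h2]
            · simp [h1]
          rw [this]
          rw [show ∑ s ∈ univ.filter (fun s : P => u ≤ s ∧ s ≤ t), (μP u s : ℝ)
              = ((∑ s ∈ univ.filter (fun s : P => u ≤ s ∧ s ≤ t), μP u s : ℤ) : ℝ) by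
            push_cast; rfl]
          rw [hdelta u t]
          split <;> simp
      _ = φ t := by
          simp only [ite_mul, one_mul, zero_mul]
          rw [sum_ite_eq' univ t (fun u => φ (u : D))]
          simp
  -- main induction
  have key : ∀ x : D, ∀ u : P, (u : D) = x → (u : D) ≠ ⊥ → ¬ SupIrred (u : D) → F u = 0 := by
    intro x
    induction x using WellFoundedLT.induction with
    | _ x IH =>
      intro u hux hub hui
      -- the "valuation determined by irreducibles" sum
      have hG : ∀ y : D, y ≤ x →
          ∑ s ∈ univ.filter (fun s : P => (s : D) ≤ y ∧ ((s : D) = ⊥ ∨ SupIrred (s : D))),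
            F s = φ y := by
        intro y
        induction y using WellFoundedLT.induction with
        | _ y IHy =>
          intro hyx
          by_cases hyb : y = ⊥
          · subst hyb
            rw [hφbot]
            apply sum_eq_zero
            intro s hs
            simp only [mem_filter, mem_univ, true_and] at hs
            have hsb : (s : D) = ⊥ := le_bot_iff.mp hs.1
            rw [hFdef]
            apply sum_eq_zero
            intro v hv
            simp only [mem_filter, mem_univ, true_and] at hv
            have : (v : D) = ⊥ := le_bot_iff.mp (le_trans (Subtype.coe_le_coe.mpr hv) hsb.le)
            rw [this, hφbot, mul_zero]
          · by_cases hyi : SupIrred y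
            · -- y is join-irreducible, hence in P
              set ty : P := ⟨y, hirr y hyi⟩ with hty
              have heq : univ.filter (fun s : P => s ≤ ty)
                  = (univ.filter (fun s : P => s ≤ ty)).filter
                      (fun s : P => (s : D) = ⊥ ∨ SupIrred (s : D))
                    ∪ (univ.filter (fun s : P => s ≤ ty)).filter
                      (fun s : P => ¬((s : D) = ⊥ ∨ SupIrred (s : D))) := by
                rw [filter_union_filter_not_eq]
              have hsum := hinv ty
              rw [heq, sum_union (disjoint_filter_filter_not _ _ _)] at hsum
              have hzero : ∑ s ∈ (univ.filter (fun s : P => s ≤ ty)).filter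
                  (fun s : P => ¬((s : D) = ⊥ ∨ SupIrred (s : D))), F s = 0 := by
                apply sum_eq_zero
                intro s hs
                simp only [mem_filter, mem_univ, true_and, not_or] at hs
                obtain ⟨hsle, hsb, hsi⟩ := hs
                have hsy : (s : D) ≤ y := hsle
                have hsne : (s : D) ≠ y := fun h => hsi (h ▸ hyi)
                have hslt : (s : D) < x := lt_of_lt_of_le (lt_of_le_of_ne hsy hsne) hyx
                exact IH _ hslt s rfl hsb hsi
              rw [hzero, add_zero] at hsum
              rw [← hsum]
              apply sum_congr _ (fun _ _ => rfl)
              rw [filter_filter]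
              apply filter_congr
              intro s _
              constructor
              · rintro ⟨h1, h2⟩; exact ⟨h1, h2⟩
              · rintro ⟨h1, h2⟩; exact ⟨h1, h2⟩
            · -- y is reducible and non-bot : y = a ⊔ b with a, b < y
              rcases not_supIrred.mp hyi with hmin | ⟨a, b, hab, ha, hb⟩
              · exact absurd (hmin.eq_bot) hyb
              · have hay : a < y := hab ▸ ha
                have hby : b < y := hab ▸ hb
                have haby : a ⊓ b < y := lt_of_le_of_lt inf_le_left hay
                have hSunion : univ.filter (fun s : P => (s : D) ≤ y ∧
                      ((s : D) = ⊥ ∨ SupIrred (s : D)))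
                    = univ.filter (fun s : P => (s : D) ≤ a ∧
                        ((s : D) = ⊥ ∨ SupIrred (s : D)))
                      ∪ univ.filter (fun s : P => (s : D) ≤ b ∧
                        ((s : D) = ⊥ ∨ SupIrred (s : D))) := by
                  ext s
                  simp only [mem_filter, mem_univ, true_and, mem_union]
                  constructor
                  · rintro ⟨hsy, hc⟩
                    rcases hc with hsb | hsi
                    · exact Or.inl ⟨hsb ▸ bot_le, Or.inl hsb⟩
                    · have hprime := hsi.supPrime
                      have : (s : D) ≤ a ⊔ b := hab.symm ▸ hsy
                      rcases hprime.2 this with h | h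
                      · exact Or.inl ⟨h, Or.inr hsi⟩
                      · exact Or.inr ⟨h, Or.inr hsi⟩
                  · rintro (⟨h1, h2⟩ | ⟨h1, h2⟩)
                    · exact ⟨h1.trans hay.le, h2⟩
                    · exact ⟨h1.trans hby.le, h2⟩
                have hSinter : univ.filter (fun s : P => (s : D) ≤ a ⊓ b ∧
                      ((s : D) = ⊥ ∨ SupIrred (s : D)))
                    = univ.filter (fun s : P => (s : D) ≤ a ∧
                        ((s : D) = ⊥ ∨ SupIrred (s : D)))
                      ∩ univ.filter (fun s : P => (s : D) ≤ b ∧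
                        ((s : D) = ⊥ ∨ SupIrred (s : D))) := by
                  ext s
                  simp only [mem_filter, mem_univ, true_and, mem_inter, le_inf_iff]
                  tauto
                have hua := IHy a (hab ▸ ha) (hay.le.trans hyx)
                have hub' := IHy b (hab ▸ hb) (hby.le.trans hyx)
                have huab := IHy (a ⊓ b) haby (haby.le.trans hyx)
                have := sum_union_inter (s₁ := univ.filter (fun s : P => (s : D) ≤ a ∧
                        ((s : D) = ⊥ ∨ SupIrred (s : D))))
                  (s₂ := univ.filter (fun s : P => (s : D) ≤ b ∧
                        ((s : D) = ⊥ ∨ SupIrred (s : D)))) (f := F)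
                rw [← hSunion, ← hSinter, hua, hub', huab] at this
                have hval := hφ a b
                rw [hab] at hval
                linarith
      -- conclude: F u = 0
      subst hux
      have hsum := hinv u
      have heq : univ.filter (fun s : P => s ≤ u)
          = (univ.filter (fun s : P => s ≤ u)).filter
              (fun s : P => (s : D) = ⊥ ∨ SupIrred (s : D))
            ∪ (univ.filter (fun s : P => s ≤ u)).filter
              (fun s : P => ¬((s : D) = ⊥ ∨ SupIrred (s : D))) := by
        rw [filter_union_filter_not_eq]
      rw [heq, sum_union (disjoint_filter_filter_not _ _ _)] at hsum
      have h1 : ∑ s ∈ (univ.filter (fun s : P => s ≤ u)).filter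
          (fun s : P => (s : D) = ⊥ ∨ SupIrred (s : D)), F s = φ (u : D) := by
        rw [← hG (u : D) le_rfl]
        apply sum_congr _ (fun _ _ => rfl)
        rw [filter_filter]
        apply filter_congr
        intro s _
        constructor
        · rintro ⟨hle, hc⟩; exact ⟨hle, hc⟩
        · rintro ⟨hle, hc⟩; exact ⟨hle, hc⟩
      have h2 : ∑ s ∈ (univ.filter (fun s : P => s ≤ u)).filter
          (fun s : P => ¬((s : D) = ⊥ ∨ SupIrred (s : D))), F s = F u := by
        apply sum_eq_single_of_mem u
        · simp only [mem_filter, mem_univ, true_and, not_or]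
          exact ⟨le_refl u, hub, hui⟩
        · intro s hs hsne
          simp only [mem_filter, mem_univ, true_and, not_or] at hs
          obtain ⟨hsle, hsb, hsi⟩ := hs
          have hslt : (s : D) < (u : D) :=
            lt_of_le_of_ne (Subtype.coe_le_coe.mpr hsle)
              (fun h => hsne (Subtype.ext h))
          exact IH _ hslt s rfl hsb hsi
      rw [h1, h2] at hsum
      linarith
  exact key (t : D) t rfl ht_bot ht_irr
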